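/- Let d ≥ 2, let 1 ≤ i, j ≤ d with i ≠ j, let p₁, p₂ ∈ {0,1}, write ε₁ = (−1)^{p₁}, ε₂ = (−1)^{p₂}, and let σ be the (d−2)-cell of the d-dimensional hypercube whose i-th entry is ε₁, whose j-th entry is ε₂, and whose other entries are all •. Then (𝟙_top ∪_{d−1} δ𝟙_σ)(•,…,•) equals 0 in ℤ₂ if i + j + p₁ + p₂ is even, and equals 1 if i + j + p₁ + p₂ is odd, where 𝟙_top is the indicator cochain of the top cell (•,…,•). -/

import Mathlib

/-- The three possible entries of a cell label of the hypercube: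
`dot` = `•` (a spanned direction), `pls` = `+`, `mns` = `−`. -/
inductive Sgn : Type
  | dot : Sgn
  | pls : Sgn
  | mns : Sgn
  deriving DecidableEq

instance instFintypeSgn : Fintype Sgn :=
  ⟨{Sgn.dot, Sgn.pls, Sgn.mns}, fun x => by cases x <;> simp⟩

/-- A cell of the `d`-dimensional hypercube, labeled by a tuple in `{•,+,−}^d`. -/
abbrev Cell (d : ℕ) := Fin d → Sgn

/-- A `ℤ₂`-cochain on the `d`-dimensional hypercube. -/
abbrev Cochain (d : ℕ) := Cell d → ZMod 2

/-- The top cell `(•,…,•)`. -/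
def topCell (d : ℕ) : Cell d := fun _ => Sgn.dot

/-- The set of coordinates of a cell labeled `•`. -/
def dots {d : ℕ} (w : Cell d) : Finset (Fin d) :=
  Finset.univ.filter (fun j => w j = Sgn.dot)

/-- The coboundary of a `ℤ₂`-cochain: `(δα)(w)` is the sum of `α` over all cells obtained
from `w` by replacing exactly one entry equal to `•` by `+` or by `−`. -/
def delta {d : ℕ} (α : Cochain d) : Cochain d := fun w =>
  ∑ j ∈ dots w, (α (Function.update w j Sgn.pls) + α (Function.update w j Sgn.mns))

/-- The set of coordinates where both `z` and `z'` are `•`. -/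
def bothDot {d : ℕ} (z z' : Cell d) : Finset (Fin d) :=
  Finset.univ.filter (fun j => z j = Sgn.dot ∧ z' j = Sgn.dot)

/-- The allowed values of `(z_j, z'_j)` at a coordinate `j` not in the common-`•` set `I`:
`(+,•)` or `(•,−)` when `ℓ(j) = #{i ∈ I : i < j}` is even, and `(−,•)` or `(•,+)` when it
is odd. -/
def pairCond {d : ℕ} (I : Finset (Fin d)) (j : Fin d) (a b : Sgn) : Prop :=
  if (I.filter (fun i => i < j)).card % 2 = 0 then
    (a = Sgn.pls ∧ b = Sgn.dot) ∨ (a = Sgn.dot ∧ b = Sgn.mns)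
  else
    (a = Sgn.mns ∧ b = Sgn.dot) ∨ (a = Sgn.dot ∧ b = Sgn.pls)

/-- The pairs `(z,z')` appearing in the `m`-th higher cup product evaluated on the cell `w`:
the entries of `w` equal to `+` or `−` are fixed in both arguments, there are exactly `m`
coordinates where both `z` and `z'` are `•`, and at the remaining `•`-coordinates of `w`
the parity condition `pairCond` holds. -/
def IntPair {d : ℕ} (m : ℕ) (w z z' : Cell d) : Prop :=
  (∀ j, w j ≠ Sgn.dot → z j = w j ∧ z' j = w j) ∧
    (bothDot z z').card = m ∧
    ∀ j, w j = Sgn.dot → j ∉ bothDot z z' → pairCond (bothDot z z') j (z j) (z' j)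

open Classical in
/-- The finite set of pairs in `Int_m` relative to the cell `w`. -/
noncomputable def intPairs {d : ℕ} (m : ℕ) (w : Cell d) : Finset (Cell d × Cell d) :=
  Finset.univ.filter (fun p => IntPair m w p.1 p.2)

/-- The higher cup product `α ∪_m β` of `ℤ₂`-cochains:
`(α ∪_m β)(w) = Σ_{(z,z') ∈ Int_m(w)} α(z)·β(z')`. -/
noncomputable def cup {d : ℕ} (m : ℕ) (α β : Cochain d) : Cochain d := fun w =>
  ∑ p ∈ intPairs m w, α p.1 * β p.2

/-- The `(d−1)`-cell `î_s` whose `i`-th entry is `s` and whose other entries are all `•`. -/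
def hatCell {d : ℕ} (i : Fin d) (s : Sgn) : Cell d := fun j => if j = i then s else Sgn.dot

/-- `ε(t)`: the sign `+` if `t` is even and `−` if `t` is odd. -/
def eps (t : ℕ) : Sgn := if t % 2 = 0 then Sgn.pls else Sgn.mns

/-- `α` is a `p`-cochain: it vanishes on all cells that are not `p`-cells. -/
def IsCochainOfDeg {d : ℕ} (p : ℕ) (α : Cochain d) : Prop :=
  ∀ w : Cell d, (dots w).card ≠ p → α w = 0

/-- The indicator cochain of a cell: value `1` on that cell and `0` elsewhere. -/
def indicator {d : ℕ} (c : Cell d) : Cochain d := fun w => if w = c then 1 else 0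

namespace St9

lemma eps_ne_dot (t : ℕ) : eps t ≠ Sgn.dot := by
  unfold eps; split <;> simp

lemma hatCell_dot_iff {d : ℕ} (k : Fin d) (s : Sgn) (hs : s ≠ Sgn.dot) (m : Fin d) :
    hatCell k s m = Sgn.dot ↔ m ≠ k := by
  unfold hatCell; split <;> simp_all

lemma dots_hatCell {d : ℕ} (k : Fin d) (s : Sgn) (hs : s ≠ Sgn.dot) :
    dots (hatCell k s) = Finset.univ.erase k := by
  ext m
  simp [dots, Finset.mem_erase, hatCell_dot_iff k s hs]

lemma bothDot_top {d : ℕ} (z' : Cell d) : bothDot (topCell d) z' = dots z' := by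
  ext m; simp [bothDot, dots, topCell]

lemma filter_card_erase {d : ℕ} (k : Fin d) :
    (((Finset.univ : Finset (Fin d)).erase k).filter (fun m => m < k)).card = k.val := by
  have h1 : ((Finset.univ : Finset (Fin d)).erase k).filter (fun m => m < k)
      = Finset.Iio k := by
    ext m
    simp only [Finset.mem_filter, Finset.mem_erase, Finset.mem_univ, true_and, and_true,
      Finset.mem_Iio]
    constructor
    · rintro ⟨-, h⟩; exact h
    · intro h; exact ⟨ne_of_lt h, h⟩
  rw [h1, Fin.card_Iio]

lemma pairCond_hat {d : ℕ} (k : Fin d) :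
    pairCond (Finset.univ.erase k) k Sgn.dot (eps (k.val + 1)) := by
  unfold pairCond
  rw [filter_card_erase]
  unfold eps
  rcases Nat.even_or_odd k.val with h | h
  · have h0 : k.val % 2 = 0 := Nat.even_iff.mp h
    have h1 : ¬ ((k.val + 1) % 2 = 0) := by omega
    simp [h0, h1]
  · have h0 : k.val % 2 = 1 := Nat.odd_iff.mp h
    have h1 : (k.val + 1) % 2 = 0 := by omega
    simp [h0, h1]


lemma intpair_top_char {d : ℕ} (hd : 1 ≤ d) (z' : Cell d) :
    IntPair (d-1) (topCell d) (topCell d) z' ↔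
      ∃ k : Fin d, z' = hatCell k (eps (k.val + 1)) := by
  constructor
  · rintro ⟨-, hcard, hpc⟩
    rw [bothDot_top] at hcard
    have hcompl : (Finset.univ \ dots z').card = 1 := by
      rw [Finset.card_sdiff_of_subset (Finset.subset_univ _), Finset.card_univ, Fintype.card_fin, hcard]
      omega
    obtain ⟨k, hk⟩ := Finset.card_eq_one.mp hcompl
    have hkd : z' k ≠ Sgn.dot := by
      have hmem : k ∈ Finset.univ \ dots z' := by rw [hk]; exact Finset.mem_singleton_self k
      simpa [dots] using hmem
    have hdots : dots z' = Finset.univ.erase k := by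
      ext m
      by_cases hm : m = k
      · subst hm; simp [dots, hkd, Finset.mem_erase]
      · have hnm : m ∉ Finset.univ \ dots z' := by rw [hk]; simp [hm]
        simp only [Finset.mem_sdiff, Finset.mem_univ, true_and, not_not] at hnm
        simp [Finset.mem_erase, hm, hnm]
    have hknotin : k ∉ bothDot (topCell d) z' := by
      rw [bothDot_top, hdots]; simp
    have hpck := hpc k rfl hknotin
    rw [bothDot_top, hdots] at hpck
    unfold pairCond at hpck
    rw [filter_card_erase] at hpck
    have hzk : z' k = eps (k.val + 1) := by
      unfold eps
      rcases Nat.even_or_odd k.val with h | h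
      · have h0 : k.val % 2 = 0 := Nat.even_iff.mp h
        have h1 : ¬ ((k.val + 1) % 2 = 0) := by omega
        rw [if_pos h0] at hpck
        rw [if_neg h1]
        rcases hpck with ⟨h2, -⟩ | ⟨-, h3⟩
        · exact absurd h2 (by simp [topCell])
        · exact h3
      · have h0 : ¬ (k.val % 2 = 0) := by rw [Nat.odd_iff] at h; omega
        have h1 : (k.val + 1) % 2 = 0 := by rw [Nat.odd_iff] at h; omega
        rw [if_neg h0] at hpck
        rw [if_pos h1]
        rcases hpck with ⟨h2, -⟩ | ⟨-, h3⟩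
        · exact absurd h2 (by simp [topCell])
        · exact h3
    refine ⟨k, funext fun m => ?_⟩
    by_cases hm : m = k
    · subst hm; simp [hatCell, hzk]
    · have hmd : m ∈ dots z' := by rw [hdots]; simp [hm]
      simp only [dots, Finset.mem_filter] at hmd
      simp [hatCell, hm, hmd.2]
  · rintro ⟨k, rfl⟩
    have hbd : bothDot (topCell d) (hatCell k (eps (k.val + 1))) = Finset.univ.erase k := by
      rw [bothDot_top, dots_hatCell k _ (eps_ne_dot _)]
    refine ⟨fun j h => absurd rfl h, ?_, ?_⟩
    · rw [hbd, Finset.card_erase_of_mem (Finset.mem_univ k), Finset.card_univ, Fintype.card_fin]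
    · intro m _ hm
      rw [hbd] at hm ⊢
      have hmk : m = k := by
        by_contra h
        exact hm (Finset.mem_erase.mpr ⟨h, Finset.mem_univ m⟩)
      subst hmk
      have h1 : topCell d m = Sgn.dot := rfl
      have h2 : hatCell m (eps (m.val + 1)) m = eps (m.val + 1) := by simp [hatCell]
      rw [h1, h2]
      exact pairCond_hat m


lemma hat_inj {d : ℕ} (k k' : Fin d)
    (h : hatCell k (eps (k.val + 1)) = hatCell k' (eps (k'.val + 1))) : k = k' := by
  by_contra hne
  have hc := congrFun h k
  simp [hatCell, hne] at hc
  exact eps_ne_dot _ hc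

lemma cup_eval {d : ℕ} (hd : 1 ≤ d) (β : Cochain d) :
    cup (d - 1) (indicator (topCell d)) β (topCell d)
      = ∑ k : Fin d, β (hatCell k (eps (k.val + 1))) := by
  classical
  unfold cup
  rw [← Finset.sum_filter_of_ne
    (p := fun p : Cell d × Cell d => p.1 = topCell d)
    (by intro p _ h
        by_contra hne
        simp [indicator, hne] at h)]
  have hset : (intPairs (d - 1) (topCell d)).filter (fun p => p.1 = topCell d)
      = Finset.univ.image (fun k : Fin d => (topCell d, hatCell k (eps (k.val + 1)))) := by
    ext p
    simp only [intPairs, Finset.mem_filter, Finset.mem_univ, true_and, Finset.mem_image]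
    constructor
    · rintro ⟨hip, h1⟩
      rw [h1] at hip
      obtain ⟨k, hk⟩ := (intpair_top_char hd p.2).mp hip
      exact ⟨k, by rw [Prod.ext_iff]; exact ⟨h1.symm, hk.symm⟩⟩
    · rintro ⟨k, rfl⟩
      refine ⟨?_, rfl⟩
      exact (intpair_top_char hd _).mpr ⟨k, rfl⟩
  rw [hset, Finset.sum_image (fun k _ k' _ h => hat_inj k k' (congrArg Prod.snd h))]
  simp [indicator]

lemma update_hat_eq {d : ℕ} (i j : Fin d) (hij : i ≠ j) (e₁ e₂ : Sgn)
    (h1 : e₁ ≠ Sgn.dot) (h2 : e₂ ≠ Sgn.dot) (k l : Fin d) (hkl : l ≠ k)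
    (s t : Sgn) (hs : s ≠ Sgn.dot) (ht : t ≠ Sgn.dot) :
    Function.update (hatCell k s) l t
        = (fun m => if m = i then e₁ else if m = j then e₂ else Sgn.dot)
      ↔ ((k = i ∧ l = j ∧ s = e₁ ∧ t = e₂) ∨ (k = j ∧ l = i ∧ s = e₂ ∧ t = e₁)) := by
  constructor
  · intro h
    have hk := congrFun h k
    have hl := congrFun h l
    simp only [Function.update_apply, hatCell] at hk hl
    rw [if_neg (fun hh => hkl hh.symm)] at hk
    simp only [if_true] at hk hl
    by_cases hki : k = i
    · rw [if_pos hki] at hk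
      have hli : l ≠ i := fun h' => hkl (h'.trans hki.symm)
      by_cases hlj : l = j
      · rw [if_neg hli, if_pos hlj] at hl
        exact Or.inl ⟨hki, hlj, hk, hl⟩
      · rw [if_neg hli, if_neg hlj] at hl
        exact absurd hl ht
    · by_cases hkj : k = j
      · rw [if_neg hki, if_pos hkj] at hk
        have hlj : l ≠ j := fun h' => hkl (h'.trans hkj.symm)
        by_cases hli : l = i
        · rw [if_pos hli] at hl
          exact Or.inr ⟨hkj, hli, hk, hl⟩
        · rw [if_neg hli, if_neg hlj] at hl
          exact absurd hl ht
      · rw [if_neg hki, if_neg hkj] at hk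
        exact absurd hk hs
  · rintro (⟨rfl, rfl, rfl, rfl⟩ | ⟨rfl, rfl, rfl, rfl⟩) <;>
    · funext m
      by_cases hml : m = l <;> by_cases hmk : m = k <;>
        simp_all [Function.update_apply, hatCell]


lemma delta_ind_hat {d : ℕ} (i j : Fin d) (hij : i ≠ j) (e₁ e₂ : Sgn)
    (h1 : e₁ ≠ Sgn.dot) (h2 : e₂ ≠ Sgn.dot) (k : Fin d) (s : Sgn) (hs : s ≠ Sgn.dot) :
    delta (indicator (fun m => if m = i then e₁ else if m = j then e₂ else Sgn.dot))
        (hatCell k s)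
      = (if k = i ∧ s = e₁ then 1 else 0) + (if k = j ∧ s = e₂ then 1 else 0) := by
  classical
  set σ : Cell d := fun m => if m = i then e₁ else if m = j then e₂ else Sgn.dot with hσ
  have key : ∀ (l : Fin d) (t : Sgn), l ≠ k → t ≠ Sgn.dot →
      indicator σ (Function.update (hatCell k s) l t)
        = if ((k = i ∧ l = j ∧ s = e₁ ∧ t = e₂) ∨ (k = j ∧ l = i ∧ s = e₂ ∧ t = e₁))
            then 1 else 0 := by
    intro l t hl ht
    unfold indicator
    by_cases h : Function.update (hatCell k s) l t = σ
    · rw [if_pos h, if_pos ((update_hat_eq i j hij e₁ e₂ h1 h2 k l hl s t hs ht).mp h)]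
    · rw [if_neg h,
        if_neg (fun hc => h ((update_hat_eq i j hij e₁ e₂ h1 h2 k l hl s t hs ht).mpr hc))]
  unfold delta
  rw [dots_hatCell k s hs]
  by_cases hki : k = i
  · have hkj : k ≠ j := by rw [hki]; exact hij
    have hjm : j ∈ Finset.univ.erase k := Finset.mem_erase.mpr ⟨fun h => hkj h.symm, Finset.mem_univ j⟩
    rw [Finset.sum_eq_single_of_mem j hjm]
    · rw [key j Sgn.pls (fun h => hkj h.symm) (by simp),
        key j Sgn.mns (fun h => hkj h.symm) (by simp)]
      have hji : ¬ (j = i) := fun h => hij h.symm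
      by_cases hse : s = e₁
      · simp only [hki, hse, hji, true_and, and_true, false_and, and_false, or_false,
          if_pos, eq_self_iff_true]
        cases e₂ with
        | dot => exact absurd rfl h2
        | pls => simp [hij]
        | mns => simp [hij]
      · simp [hki, hkj, hse, hji, hij]
    · intro l hlm hlj
      have hlk : l ≠ k := (Finset.mem_erase.mp hlm).1
      rw [key l Sgn.pls hlk (by simp), key l Sgn.mns hlk (by simp)]
      have : ¬ (k = i ∧ l = j ∧ s = e₁ ∧ Sgn.pls = e₂) ∧
          ¬ (k = j ∧ l = i ∧ s = e₂ ∧ Sgn.pls = e₁) := by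
        constructor
        · rintro ⟨-, h', -⟩; exact hlj h'
        · rintro ⟨h', -⟩; exact hkj h'
      simp [this.1, this.2, hlj, hkj]
  · by_cases hkj : k = j
    · have him : i ∈ Finset.univ.erase k := Finset.mem_erase.mpr ⟨fun h => hki h.symm, Finset.mem_univ i⟩
      have hji : ¬ (j = i) := fun h => hij h.symm
      rw [Finset.sum_eq_single_of_mem i him]
      · rw [key i Sgn.pls (fun h => hki h.symm) (by simp),
          key i Sgn.mns (fun h => hki h.symm) (by simp)]
        by_cases hse : s = e₂
        · simp only [hkj, hse, hki, true_and, and_true, false_and, and_false, or_false,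
            false_or, if_pos, eq_self_iff_true]
          cases e₁ with
          | dot => exact absurd rfl h1
          | pls => simp [hij, hji]
          | mns => simp [hij, hji]
        · simp [hki, hkj, hse, hij, hji]
      · intro l hlm hli
        have hlk : l ≠ k := (Finset.mem_erase.mp hlm).1
        rw [key l Sgn.pls hlk (by simp), key l Sgn.mns hlk (by simp)]
        simp [hki, hli]
    · rw [Finset.sum_eq_zero, if_neg (fun h => hki h.1), if_neg (fun h => hkj h.1)]
      · simp
      · intro l hlm
        have hlk : l ≠ k := (Finset.mem_erase.mp hlm).1
        rw [key l Sgn.pls hlk (by simp), key l Sgn.mns hlk (by simp)]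
        simp [hki, hkj]


end St9

/-- For `d ≥ 2`, `1 ≤ i, j ≤ d` with `i ≠ j` (written `1`-based as
`i.val + 1`, `j.val + 1`), `p₁ p₂ ∈ {0,1}`, `ε₁ = (−1)^{p₁}`, `ε₂ = (−1)^{p₂}`, and `σ` the
`(d−2)`-cell with `i`-th entry `ε₁`, `j`-th entry `ε₂` and all other entries `•`:
`(𝟙_top ∪_{d−1} δ𝟙_σ)(•,…,•)` equals `0` in `ℤ₂` if `i + j + p₁ + p₂` is even, and
equals `1` if `i + j + p₁ + p₂` is odd. -/
theorem indicator_top_cup_delta (d : ℕ) (hd : 2 ≤ d) (i j : Fin d) (hij : i ≠ j)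
    (p₁ p₂ : ℕ) (hp₁ : p₁ ≤ 1) (hp₂ : p₂ ≤ 1) :
    (Even ((i.val + 1) + (j.val + 1) + p₁ + p₂) →
      cup (d - 1) (indicator (topCell d))
        (delta (indicator (fun t => if t = i then eps p₁ else if t = j then eps p₂ else Sgn.dot)))
        (topCell d) = 0) ∧
    (¬ Even ((i.val + 1) + (j.val + 1) + p₁ + p₂) →
      cup (d - 1) (indicator (topCell d))
        (delta (indicator (fun t => if t = i then eps p₁ else if t = j then eps p₂ else Sgn.dot)))
        (topCell d) = 1) := by
  classical
  have hd1 : 1 ≤ d := le_trans one_le_two hd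
  have hval : cup (d - 1) (indicator (topCell d))
      (delta (indicator (fun t => if t = i then eps p₁ else if t = j then eps p₂ else Sgn.dot)))
      (topCell d)
      = (if eps (i.val + 1) = eps p₁ then (1 : ZMod 2) else 0)
        + (if eps (j.val + 1) = eps p₂ then (1 : ZMod 2) else 0) := by
    rw [St9.cup_eval hd1]
    have hterm : ∀ k : Fin d,
        delta (indicator (fun t => if t = i then eps p₁ else if t = j then eps p₂ else Sgn.dot))
          (hatCell k (eps (k.val + 1)))
        = (if k = i then (if eps (k.val + 1) = eps p₁ then (1 : ZMod 2) else 0) else 0)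
          + (if k = j then (if eps (k.val + 1) = eps p₂ then (1 : ZMod 2) else 0) else 0) := by
      intro k
      rw [St9.delta_ind_hat i j hij _ _ (St9.eps_ne_dot _) (St9.eps_ne_dot _) k _
        (St9.eps_ne_dot _)]
      congr 1
      · by_cases h : k = i <;> simp [h]
      · by_cases h : k = j <;> simp [h]
    simp only [hterm]
    rw [Finset.sum_add_distrib, Finset.sum_ite_eq' Finset.univ i, Finset.sum_ite_eq' Finset.univ j]
    simp
  have heps : ∀ a b : ℕ, eps a = eps b ↔ a % 2 = b % 2 := by
    intro a b
    unfold eps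
    by_cases ha : a % 2 = 0 <;> by_cases hb : b % 2 = 0 <;> simp [ha, hb] <;> omega
  constructor <;> intro hpar <;> rw [hval] <;>
    by_cases hA : (i.val + 1) % 2 = p₁ % 2 <;> by_cases hB : (j.val + 1) % 2 = p₂ % 2
  · rw [if_pos ((heps _ _).mpr hA), if_pos ((heps _ _).mpr hB)]; decide
  · exfalso; rw [Nat.even_iff] at hpar; omega
  · exfalso; rw [Nat.even_iff] at hpar; omega
  · rw [if_neg (fun h => hA ((heps _ _).mp h)), if_neg (fun h => hB ((heps _ _).mp h))]; decide
  · exfalso; rw [Nat.even_iff] at hpar; omega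
  · rw [if_pos ((heps _ _).mpr hA), if_neg (fun h => hB ((heps _ _).mp h))]; decide
  · rw [if_neg (fun h => hA ((heps _ _).mp h)), if_pos ((heps _ _).mpr hB)]; decide
  · exfalso; rw [Nat.even_iff] at hpar; omega
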